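/- arXiv:2103.14171 — 3 statements merged into one kernel-verified Lean document; each statement's English description precedes it below -/
import Mathlib

section
/- Let Φ_x (block lower triangular with invertible diagonal blocks, in fact with identity diagonal blocks since (I−ZÂ)Φ_x − ZB̂Φ_u = I forces the diagonal blocks of Φ_x to be I) and Φ_u be block lower triangular matrices satisfying (I − ZÂ)Φ_x − ZB̂Φ_u = I. Then Φ_x is invertible, K := Φ_u Φ_x^{-1} is block lower triangular, and the closed loop with feedback u = Kx satisfies x = Φ_x w and u = Φ_u w for the dynamics x = Z(Â + B̂K)x + w. -/
open Matrix

/-- The block-downshift matrix: identity blocks on the first block sub-diagonal. -/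
def Zdown (T n : ℕ) : Matrix (Fin (T+1) × Fin n) (Fin (T+1) × Fin n) ℝ :=
  Matrix.of fun p q => if ((q.1 : ℕ) + 1 = (p.1 : ℕ) ∧ p.2 = q.2) then 1 else 0

/-- Block-diagonal repetition blkdiag(A,...,A) over the time horizon. -/
def blkdiag (T : ℕ) {a b : ℕ} (A : Matrix (Fin a) (Fin b) ℝ) :
    Matrix (Fin (T+1) × Fin a) (Fin (T+1) × Fin b) ℝ :=
  Matrix.of fun p q => if p.1 = q.1 then A p.2 q.2 else 0

/-- Block lower triangular: block (t,s) vanishes whenever t < s. -/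
def BlockLT {T a b : ℕ} (M : Matrix (Fin (T+1) × Fin a) (Fin (T+1) × Fin b) ℝ) : Prop :=
  ∀ p q, (p.1 : ℕ) < (q.1 : ℕ) → M p q = 0

def SBLT {T a b : ℕ} (M : Matrix (Fin (T+1) × Fin a) (Fin (T+1) × Fin b) ℝ) : Prop :=
  ∀ p q, (p.1 : ℕ) ≤ (q.1 : ℕ) → M p q = 0

lemma sblt_blockLT {T a b : ℕ} {M : Matrix (Fin (T+1) × Fin a) (Fin (T+1) × Fin b) ℝ}
    (h : SBLT M) : BlockLT M := fun p q hpq => h p q hpq.le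

lemma blockLT_one {T a : ℕ} : BlockLT (1 : Matrix (Fin (T+1) × Fin a) (Fin (T+1) × Fin a) ℝ) := by
  intro p q h
  have : p ≠ q := by rintro rfl; exact lt_irrefl _ h
  simp [Matrix.one_apply, this]

lemma blockLT_mul {T a b c : ℕ} {M : Matrix (Fin (T+1) × Fin a) (Fin (T+1) × Fin b) ℝ}
    {P : Matrix (Fin (T+1) × Fin b) (Fin (T+1) × Fin c) ℝ}
    (hM : BlockLT M) (hP : BlockLT P) : BlockLT (M * P) := by
  intro p q h
  rw [Matrix.mul_apply]
  apply Finset.sum_eq_zero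
  intro j _
  rcases lt_or_ge (p.1 : ℕ) (j.1 : ℕ) with hj | hj
  · rw [hM p j hj, zero_mul]
  · rw [hP j q (lt_of_le_of_lt hj h), mul_zero]

lemma sblt_mul_blockLT {T a b c : ℕ} {M : Matrix (Fin (T+1) × Fin a) (Fin (T+1) × Fin b) ℝ}
    {P : Matrix (Fin (T+1) × Fin b) (Fin (T+1) × Fin c) ℝ}
    (hM : SBLT M) (hP : BlockLT P) : SBLT (M * P) := by
  intro p q h
  rw [Matrix.mul_apply]
  apply Finset.sum_eq_zero
  intro j _
  rcases lt_or_ge (p.1 : ℕ) (j.1 : ℕ) with hj | hj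
  · rw [hM p j hj.le, zero_mul]
  · rcases lt_or_ge (j.1 : ℕ) (q.1 : ℕ) with hj2 | hj2
    · rw [hP j q hj2, mul_zero]
    · -- j.1 ≤ p.1 ≤ q.1 ≤ j.1 so all equal; need M p j = 0 when p.1 ≤ j.1
      rw [hM p j (le_trans h hj2), zero_mul]

lemma sblt_ZblkA {T a b : ℕ} (A : Matrix (Fin a) (Fin b) ℝ) :
    SBLT (Zdown T a * (blkdiag T A : Matrix (Fin (T+1) × Fin a) (Fin (T+1) × Fin b) ℝ)) := by
  intro p q h
  rw [Matrix.mul_apply]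
  apply Finset.sum_eq_zero
  intro j _
  by_cases hz : ((j.1 : ℕ) + 1 = (p.1 : ℕ) ∧ p.2 = j.2)
  · by_cases hd : j.1 = q.1
    · exfalso
      have := hz.1
      rw [hd] at this
      omega
    · show Zdown T a p j * Matrix.of (fun p q => if p.1 = q.1 then A p.2 q.2 else 0) j q = 0
      simp [hd]
  · show Matrix.of (fun p q => if ((q.1 : ℕ) + 1 = (p.1 : ℕ) ∧ p.2 = q.2) then (1:ℝ) else 0) p j * blkdiag T A j q = 0
    simp [hz]

lemma sblt_pow_zero {T a : ℕ} {N : Matrix (Fin (T+1) × Fin a) (Fin (T+1) × Fin a) ℝ}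
    (hN : SBLT N) : ∀ k p q, (p.1 : ℕ) < (q.1 : ℕ) + k → (N ^ k) p q = 0 := by
  intro k
  induction k with
  | zero => intro p q h; have : p ≠ q := by
              intro he; rw [he] at h; omega
            simp [Matrix.one_apply, this]
  | succ k ih =>
    intro p q h
    rw [pow_succ', Matrix.mul_apply]
    apply Finset.sum_eq_zero
    intro j _
    rcases le_or_gt (p.1 : ℕ) (j.1 : ℕ) with hj | hj
    · rw [hN p j hj, zero_mul]
    · rw [ih j q (by omega), mul_zero]

lemma sblt_nilpotent {T a : ℕ} {N : Matrix (Fin (T+1) × Fin a) (Fin (T+1) × Fin a) ℝ}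
    (hN : SBLT N) : N ^ (T + 1) = 0 := by
  ext p q
  exact sblt_pow_zero hN (T+1) p q (by omega)

theorem stmt_2 (T n p : ℕ)
    (A : Matrix (Fin n) (Fin n) ℝ) (B : Matrix (Fin n) (Fin p) ℝ)
    (Φx : Matrix (Fin (T+1) × Fin n) (Fin (T+1) × Fin n) ℝ)
    (Φu : Matrix (Fin (T+1) × Fin p) (Fin (T+1) × Fin n) ℝ)
    (hΦxLT : BlockLT Φx) (hΦuLT : BlockLT Φu)
    (hach : (1 - Zdown T n * blkdiag T A) * Φx - Zdown T n * blkdiag T B * Φu = 1) :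
    IsUnit Φx ∧ BlockLT (Φu * Φx⁻¹) ∧
      ∀ (w x : Fin (T+1) × Fin n → ℝ) (u : Fin (T+1) × Fin p → ℝ),
        x = (Zdown T n * (blkdiag T A + blkdiag T B * (Φu * Φx⁻¹))) *ᵥ x + w →
        u = (Φu * Φx⁻¹) *ᵥ x →
        x = Φx *ᵥ w ∧ u = Φu *ᵥ w := by
  -- N is strictly block lower triangular and Φx = 1 + N
  set N : Matrix (Fin (T+1) × Fin n) (Fin (T+1) × Fin n) ℝ :=
    Zdown T n * blkdiag T A * Φx + Zdown T n * blkdiag T B * Φu with hNdef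
  have hN : SBLT N := by
    intro p' q' h
    have h1 := sblt_mul_blockLT (sblt_ZblkA A) hΦxLT p' q' h
    have h2 := sblt_mul_blockLT (sblt_ZblkA B) hΦuLT p' q' h
    simp only [hNdef, Matrix.add_apply, Matrix.mul_assoc] at *
    rw [h1, h2, add_zero]
  clear_value N
  have hΦx : Φx = 1 + N := by
    rw [sub_mul, one_mul, sub_sub, ← hNdef] at hach
    exact sub_eq_iff_eq_add.mp hach
  -- explicit inverse
  set S : Matrix (Fin (T+1) × Fin n) (Fin (T+1) × Fin n) ℝ :=
    ∑ k ∈ Finset.range (T + 1), (-N) ^ k with hSdef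
  clear_value S
  have hnil : (-N) ^ (T + 1) = 0 := by
    rw [neg_pow, sblt_nilpotent hN, mul_zero]
  have hSN : S * Φx = 1 := by
    have h1 := geom_sum_mul (-N) (T + 1)
    rw [hnil, zero_sub, ← hSdef] at h1
    have h2 : S * (1 + N) = -(S * (-N - 1)) := by noncomm_ring
    rw [hΦx, h2, h1, neg_neg]
  have hNS : Φx * S = 1 := by
    have h1 := mul_geom_sum (-N) (T + 1)
    rw [hnil, zero_sub, ← hSdef] at h1
    have h2 : (1 + N) * S = -((-N - 1) * S) := by noncomm_ring
    rw [hΦx, h2, h1, neg_neg]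
  have hUnit : IsUnit Φx := by
    have := invertibleOfRightInverse _ _ hNS
    exact isUnit_of_invertible Φx
  have hdet : IsUnit Φx.det := (Matrix.isUnit_iff_isUnit_det Φx).mp hUnit
  have hinv : Φx⁻¹ = S := Matrix.inv_eq_right_inv hNS
  -- BlockLT of the inverse and of K
  have hSLT : BlockLT S := by
    rw [hSdef]
    intro p' q' h
    rw [Matrix.sum_apply]
    apply Finset.sum_eq_zero
    intro k _
    have hpow : ∀ m, BlockLT ((-N) ^ m) := by
      intro m
      induction m with
      | zero => simpa using (blockLT_one (T := T) (a := n))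
      | succ m ih =>
        rw [pow_succ]
        exact blockLT_mul ih (fun p'' q'' h'' => by
          simp [hN p'' q'' h''.le])
    exact hpow k p' q' h
  have hKLT : BlockLT (Φu * Φx⁻¹) := by
    rw [hinv]; exact blockLT_mul hΦuLT hSLT
  refine ⟨hUnit, hKLT, ?_⟩
  intro w x u hx hu
  set K := Φu * Φx⁻¹ with hK
  set M := Zdown T n * (blkdiag T A + blkdiag T B * K) with hM
  clear_value K M
  have hclosed : (1 - M) * Φx = 1 := by
    have hKx : K * Φx = Φu := by
      rw [hK, Matrix.mul_assoc, Matrix.nonsing_inv_mul Φx hdet, Matrix.mul_one]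
    have hMx : M * Φx = N := by
      rw [hM, Matrix.mul_assoc, Matrix.add_mul, Matrix.mul_assoc (blkdiag T B) K Φx,
        hKx, Matrix.mul_add, hNdef, ← Matrix.mul_assoc, ← Matrix.mul_assoc]
    rw [sub_mul, one_mul, hMx, hΦx, add_sub_cancel_right]
  have hΦxM : Φx * (1 - M) = 1 := by
    have : Φx⁻¹ = 1 - M := Matrix.inv_eq_left_inv hclosed
    rw [← this, Matrix.mul_nonsing_inv Φx hdet]
  have hw : (1 - M) *ᵥ x = w := by
    rw [Matrix.sub_mulVec, Matrix.one_mulVec]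
    exact sub_eq_of_eq_add' hx
  have hxw : x = Φx *ᵥ w := by
    rw [← hw, Matrix.mulVec_mulVec, hΦxM, Matrix.one_mulVec]
  constructor
  · exact hxw
  · rw [hu, hxw, Matrix.mulVec_mulVec, hK, Matrix.mul_assoc,
      Matrix.nonsing_inv_mul Φx hdet, Matrix.mul_one]
end

section
/- Let W₀ = {x₀} × {w : Gw ≤ g} with the second factor nonempty. Then H(Φ{1}x₀ + Φ{2:T}w) ≤ h for all w with Gw ≤ g if and only if there exists Ξ ≥ 0 with HΦ{2:T} = ΞG and HΦ{1}x₀ + Ξg ≤ h. -/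
open Matrix

/-- Pivot step: remove one element from the support of a conic combination. -/
lemma farkas_pivot {p : ℕ} {V : Type*} [AddCommGroup V] [Module ℝ V]
    (v : Fin p → V) (c : V) (ξ η : Fin p → ℝ)
    (hξ : ∀ i, 0 ≤ ξ i) (hsum : ∑ i, ξ i • v i = c)
    (hsupp : ∀ i, η i ≠ 0 → ξ i ≠ 0) (hη0 : ∑ i, η i • v i = 0)
    (hpos : ∃ i, 0 < η i) :
    ∃ ξ' : Fin p → ℝ, (∀ i, 0 ≤ ξ' i) ∧ (∑ i, ξ' i • v i = c) ∧
      (Finset.univ.filter fun i => ξ' i ≠ 0) ⊂ (Finset.univ.filter fun i => ξ i ≠ 0) := by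
  classical
  set I : Finset (Fin p) := Finset.univ.filter (fun i => 0 < η i) with hI
  have hIne : I.Nonempty := by
    obtain ⟨i, hi⟩ := hpos
    exact ⟨i, by simp [hI, hi]⟩
  obtain ⟨i₀, hi₀mem, hmin⟩ := I.exists_min_image (fun i => ξ i / η i) hIne
  have hi₀pos : 0 < η i₀ := by simpa [hI] using hi₀mem
  set t : ℝ := ξ i₀ / η i₀ with ht
  have ht0 : 0 ≤ t := div_nonneg (hξ _) hi₀pos.le
  refine ⟨fun i => ξ i - t * η i, ?_, ?_, ?_⟩
  · intro i
    dsimp only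
    by_cases hηi : 0 < η i
    · have hle : t ≤ ξ i / η i := hmin i (by simp [hI, hηi])
      have : t * η i ≤ ξ i := by
        rw [le_div_iff₀ hηi] at hle; linarith
      simpa using sub_nonneg.mpr this
    · have hηi' : η i ≤ 0 := not_lt.mp hηi
      nlinarith [hξ i]
  · have : ∑ i, (ξ i - t * η i) • v i
        = (∑ i, ξ i • v i) - t • ∑ i, η i • v i := by
      rw [Finset.smul_sum, ← Finset.sum_sub_distrib]
      congr 1; funext i
      rw [sub_smul, smul_smul]
    rw [this, hη0, smul_zero, sub_zero, hsum]
  · constructor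
    · intro i hi
      simp only [Finset.mem_filter, Finset.mem_univ, true_and] at hi ⊢
      intro hξi
      apply hi
      have hηi : η i = 0 := by
        by_contra hc; exact (hsupp i hc) hξi
      simp [hξi, hηi]
    · intro hsub
      have hmem : i₀ ∈ Finset.univ.filter fun i => ξ i ≠ 0 := by
        simp only [Finset.mem_filter, Finset.mem_univ, true_and]
        exact hsupp i₀ (ne_of_gt hi₀pos)
      have := hsub hmem
      simp only [Finset.mem_filter, Finset.mem_univ, true_and] at this
      apply this
      rw [ht, div_mul_cancel₀ _ (ne_of_gt hi₀pos), sub_self]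

/-- Carathéodory for cones: a conic combination can be supported on a linearly
independent subfamily. -/
lemma farkas_carath {p : ℕ} {V : Type*} [AddCommGroup V] [Module ℝ V]
    (v : Fin p → V) (c : V) (ξ : Fin p → ℝ) (hξ : ∀ i, 0 ≤ ξ i)
    (hsum : ∑ i, ξ i • v i = c) :
    ∃ T : Finset (Fin p), LinearIndependent ℝ (fun i : T => v (i : Fin p)) ∧
      ∃ η : Fin p → ℝ, (∀ i, 0 ≤ η i) ∧ (∀ i, i ∉ T → η i = 0) ∧ ∑ i, η i • v i = c := by
  classical
  suffices H : ∀ (N : ℕ) (ξ : Fin p → ℝ),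
      (Finset.univ.filter fun i => ξ i ≠ 0).card ≤ N → (∀ i, 0 ≤ ξ i) →
      (∑ i, ξ i • v i = c) →
      ∃ T : Finset (Fin p), LinearIndependent ℝ (fun i : T => v (i : Fin p)) ∧
        ∃ η : Fin p → ℝ, (∀ i, 0 ≤ η i) ∧ (∀ i, i ∉ T → η i = 0) ∧ ∑ i, η i • v i = c by
    exact H (Finset.univ.filter fun i => ξ i ≠ 0).card ξ le_rfl hξ hsum
  intro N
  induction N with
  | zero =>
    intro ξ hcard hξ hsum
    refine ⟨∅, ?_, ξ, hξ, ?_, hsum⟩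
    · haveI : IsEmpty ((∅ : Finset (Fin p)) : Type) := by
        constructor; rintro ⟨i, hi⟩; simp at hi
      exact linearIndependent_empty_type
    · intro i _
      by_contra hc
      have : i ∈ Finset.univ.filter fun i => ξ i ≠ 0 := by simp [hc]
      have := Finset.card_pos.mpr ⟨i, this⟩
      omega
  | succ N ih =>
    intro ξ hcard hξ hsum
    set S : Finset (Fin p) := Finset.univ.filter fun i => ξ i ≠ 0 with hS
    by_cases hli : LinearIndependent ℝ (fun i : S => v (i : Fin p))
    · refine ⟨S, hli, ξ, hξ, ?_, hsum⟩
      intro i hi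
      by_contra hc
      exact hi (by simp [hS, hc])
    · obtain ⟨g, hg0, i₁, hgi₁⟩ := Fintype.not_linearIndependent_iff.mp hli
      set η : Fin p → ℝ := fun i => if h : i ∈ S then g ⟨i, h⟩ else 0 with hη
      have hηsupp : ∀ i, η i ≠ 0 → ξ i ≠ 0 := by
        intro i hi
        by_contra hc
        apply hi
        have : i ∉ S := by simp [hS, hc]
        simp [hη, this]
      have hηsum : ∑ i, η i • v i = 0 := by
        calc ∑ i, η i • v i
            = ∑ i ∈ S, η i • v i :=
              (Finset.sum_subset S.subset_univ
                (fun x _ hx => by simp [hη, hx])).symm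
          _ = ∑ i ∈ S.attach, η (i : Fin p) • v (i : Fin p) :=
              (Finset.sum_attach S _).symm
          _ = ∑ i : S, g i • v (i : Fin p) := by
              refine Finset.sum_congr rfl ?_
              rintro ⟨i, hi⟩ _
              simp [hη, hi]
          _ = 0 := hg0
      have hstep : ∃ ξ' : Fin p → ℝ, (∀ i, 0 ≤ ξ' i) ∧ (∑ i, ξ' i • v i = c) ∧
          (Finset.univ.filter fun i => ξ' i ≠ 0) ⊂ S := by
        by_cases hpos : ∃ i, 0 < η i
        · exact farkas_pivot v c ξ η hξ hsum hηsupp hηsum hpos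
        · push_neg at hpos
          have hηi₁ : η (i₁ : Fin p) ≠ 0 := by
            have : η (i₁ : Fin p) = g i₁ := by simp [hη, i₁.2]
            rw [this]; exact hgi₁
          refine farkas_pivot v c ξ (-η) hξ hsum ?_ ?_ ?_
          · intro i hi
            exact hηsupp i (by simpa using hi)
          · have : ∑ i, (-η) i • v i = -∑ i, η i • v i := by
              rw [← Finset.sum_neg_distrib]
              congr 1; funext i; simp [neg_smul]
            rw [this, hηsum, neg_zero]
          · exact ⟨i₁, by
              have := lt_of_le_of_ne (hpos (i₁ : Fin p)) hηi₁
              simpa using this⟩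
      obtain ⟨ξ', hξ'0, hξ'sum, hξ'ss⟩ := hstep
      have hcard' : (Finset.univ.filter fun i => ξ' i ≠ 0).card ≤ N := by
        have := Finset.card_lt_card hξ'ss
        omega
      exact ih ξ' hcard' hξ'0 hξ'sum


lemma farkas_cone_isClosed {p m : ℕ} (v : Fin p → EuclideanSpace ℝ (Fin m)) :
    IsClosed {x : EuclideanSpace ℝ (Fin m) |
      ∃ ξ : Fin p → ℝ, (∀ i, 0 ≤ ξ i) ∧ ∑ i, ξ i • v i = x} := by
  classical
  have hmain : {x : EuclideanSpace ℝ (Fin m) |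
        ∃ ξ : Fin p → ℝ, (∀ i, 0 ≤ ξ i) ∧ ∑ i, ξ i • v i = x}
      = ⋃ T : Finset (Fin p),
        {x : EuclideanSpace ℝ (Fin m) |
          LinearIndependent ℝ (fun i : T => v (i : Fin p)) ∧
          ∃ ξ : Fin p → ℝ, (∀ i, 0 ≤ ξ i) ∧ (∀ i, i ∉ T → ξ i = 0) ∧
            ∑ i, ξ i • v i = x} := by
    ext x
    simp only [Set.mem_setOf_eq, Set.mem_iUnion]
    constructor
    · rintro ⟨ξ, hξ, hsum⟩
      obtain ⟨T, hli, η, hη, hηsupp, hηsum⟩ := farkas_carath v x ξ hξ hsum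
      exact ⟨T, hli, η, hη, hηsupp, hηsum⟩
    · rintro ⟨T, _, ξ, hξ, _, hsum⟩
      exact ⟨ξ, hξ, hsum⟩
  rw [hmain]
  apply isClosed_iUnion_of_finite
  intro T
  by_cases hli : LinearIndependent ℝ (fun i : T => v (i : Fin p))
  · -- the set equals the image of the nonnegative orthant under an injective linear map
    let L : (↥T → ℝ) →ₗ[ℝ] EuclideanSpace ℝ (Fin m) :=
      { toFun := fun ζ => ∑ i : T, ζ i • v (i : Fin p)
        map_add' := by
          intro a b
          simp only [Pi.add_apply, add_smul, Finset.sum_add_distrib]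
        map_smul' := by
          intro r a
          simp only [Pi.smul_apply, smul_eq_mul, RingHom.id_apply, Finset.smul_sum, smul_smul] }
    have hker : LinearMap.ker L = ⊥ := by
      rw [LinearMap.ker_eq_bot']
      intro ζ hζ
      funext i
      exact Fintype.linearIndependent_iff.mp hli ζ hζ i
    have hemb := LinearMap.isClosedEmbedding_of_injective (f := L) hker
    have hCclosed : IsClosed {ζ : ↥T → ℝ | ∀ i, 0 ≤ ζ i} := by
      have : {ζ : ↥T → ℝ | ∀ i, 0 ≤ ζ i} = ⋂ i, {ζ | 0 ≤ ζ i} := by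
        ext ζ; simp
      rw [this]
      exact isClosed_iInter fun i => isClosed_le continuous_const (continuous_apply i)
    have himg := hemb.isClosedMap _ hCclosed
    have hset : {x : EuclideanSpace ℝ (Fin m) |
        LinearIndependent ℝ (fun i : T => v (i : Fin p)) ∧
        ∃ ξ : Fin p → ℝ, (∀ i, 0 ≤ ξ i) ∧ (∀ i, i ∉ T → ξ i = 0) ∧
          ∑ i, ξ i • v i = x}
        = L '' {ζ : ↥T → ℝ | ∀ i, 0 ≤ ζ i} := by
      ext x
      simp only [Set.mem_setOf_eq, Set.mem_image]
      constructor
      · rintro ⟨-, ξ, hξ, hξsupp, hsum⟩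
        refine ⟨fun i => ξ (i : Fin p), fun i => hξ _, ?_⟩
        show ∑ i : T, ξ (i : Fin p) • v (i : Fin p) = x
        rw [← hsum]
        calc ∑ i : T, ξ (i : Fin p) • v (i : Fin p)
            = ∑ i ∈ T, ξ i • v i := by
              rw [Finset.univ_eq_attach]; exact Finset.sum_attach T (fun i => ξ i • v i)
          _ = ∑ i, ξ i • v i :=
              Finset.sum_subset T.subset_univ
                (fun i _ hi => by rw [hξsupp i hi, zero_smul])
      · rintro ⟨ζ, hζ, hsum⟩
        refine ⟨hli, fun i => if h : i ∈ T then ζ ⟨i, h⟩ else 0, ?_, ?_, ?_⟩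
        · intro i
          by_cases h : i ∈ T
          · simp only [dif_pos h]; exact hζ _
          · simp [h]
        · intro i hi; simp [hi]
        · rw [← hsum]
          show ∑ i, (if h : i ∈ T then ζ ⟨i, h⟩ else 0) • v i
              = ∑ i : T, ζ i • v (i : Fin p)
          calc ∑ i, (if h : i ∈ T then ζ ⟨i, h⟩ else 0) • v i
              = ∑ i ∈ T, (if h : i ∈ T then ζ ⟨i, h⟩ else 0) • v i :=
                (Finset.sum_subset T.subset_univ
                  (fun i _ hi => by simp [hi])).symm
            _ = ∑ i ∈ T.attach, (if h : (i : Fin p) ∈ T then ζ ⟨i, h⟩ else 0) • v (i : Fin p) :=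
                (Finset.sum_attach T _).symm
            _ = ∑ i : T, ζ i • v (i : Fin p) := by
                refine Finset.sum_congr rfl ?_
                rintro ⟨i, hi⟩ _
                simp [hi]
    rw [hset]
    exact himg
  · have : {x : EuclideanSpace ℝ (Fin m) |
        LinearIndependent ℝ (fun i : T => v (i : Fin p)) ∧
        ∃ ξ : Fin p → ℝ, (∀ i, 0 ≤ ξ i) ∧ (∀ i, i ∉ T → ξ i = 0) ∧
          ∑ i, ξ i • v i = x} = ∅ := by
      ext x; simp only [Set.mem_setOf_eq, Set.mem_empty_iff_false, iff_false]
      rintro ⟨h, -⟩; exact hli h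
    rw [this]
    exact isClosed_empty

open scoped InnerProductSpace
lemma farkas_homog {p m : ℕ} (v : Fin p → EuclideanSpace ℝ (Fin m))
    (c : EuclideanSpace ℝ (Fin m))
    (h : ∀ w : EuclideanSpace ℝ (Fin m), (∀ i, ⟪v i, w⟫_ℝ ≤ 0) → ⟪c, w⟫_ℝ ≤ 0) :
    ∃ ξ : Fin p → ℝ, (∀ i, 0 ≤ ξ i) ∧ ∑ i, ξ i • v i = c := by
  classical
  set S : Set (EuclideanSpace ℝ (Fin m)) :=
    {x | ∃ ξ : Fin p → ℝ, (∀ i, 0 ≤ ξ i) ∧ ∑ i, ξ i • v i = x} with hS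
  by_contra hc
  have hcS : c ∉ S := hc
  let K : ConvexCone ℝ (EuclideanSpace ℝ (Fin m)) :=
    { carrier := S
      smul_mem' := by
        rintro r hr x ⟨ξ, hξ, hsum⟩
        refine ⟨r • ξ, fun i => mul_nonneg hr.le (hξ i), ?_⟩
        rw [← hsum, Finset.smul_sum]
        congr 1; funext i; rw [Pi.smul_apply, smul_smul, smul_eq_mul]
      add_mem' := by
        rintro x ⟨ξ, hξ, hξsum⟩ y ⟨η, hη, hηsum⟩
        refine ⟨ξ + η, fun i => add_nonneg (hξ i) (hη i), ?_⟩
        rw [← hξsum, ← hηsum, ← Finset.sum_add_distrib]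
        congr 1; funext i; rw [Pi.add_apply, add_smul] }
  have hKne : (K : Set (EuclideanSpace ℝ (Fin m))).Nonempty :=
    ⟨0, ⟨0, fun i => le_rfl, by simp⟩⟩
  have hKcl : IsClosed (K : Set (EuclideanSpace ℝ (Fin m))) := farkas_cone_isClosed v
  obtain ⟨y, hy1, hy2⟩ : ∃ y, (∀ x ∈ K, 0 ≤ ⟪x, y⟫_ℝ) ∧ ⟪y, c⟫_ℝ < 0 := by
    obtain ⟨y, h1, h2⟩ := ProperCone.hyperplane_separation'
      (⟨K.toPointedCone (by exact ⟨0, fun i => le_rfl, by simp⟩), hKcl⟩ :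
        ProperCone ℝ (EuclideanSpace ℝ (Fin m))) (x₀ := c) hcS
    exact ⟨y, h1, by rw [real_inner_comm]; exact h2⟩
  have hcy : ⟪c, -y⟫_ℝ ≤ 0 := by
    apply h
    intro i
    have hvi : v i ∈ K := by
      refine ⟨fun j => if j = i then 1 else 0, fun j => by positivity, ?_⟩
      simp [Finset.sum_ite_eq']
    have := hy1 (v i) hvi
    rw [inner_neg_right]
    linarith
  rw [inner_neg_right] at hcy
  rw [real_inner_comm] at hy2
  linarith

lemma farkas_affine {p m : ℕ} (G : Matrix (Fin p) (Fin m) ℝ) (g : Fin p → ℝ)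
    (hne : ∃ w : Fin m → ℝ, ∀ i, (G *ᵥ w) i ≤ g i)
    (c : Fin m → ℝ) (β : ℝ)
    (h : ∀ w : Fin m → ℝ, (∀ i, (G *ᵥ w) i ≤ g i) → ∑ j, c j * w j ≤ β) :
    ∃ ξ : Fin p → ℝ, (∀ i, 0 ≤ ξ i) ∧ (∀ j, ∑ i, ξ i * G i j = c j) ∧
      ∑ i, ξ i * g i ≤ β := by
  classical
  set v : Fin (p+1) → EuclideanSpace ℝ (Fin (m+1)) :=
    Fin.snoc (fun i : Fin p => WithLp.toLp 2 (Fin.snoc (G i) (-(g i)) : Fin (m+1) → ℝ))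
      (WithLp.toLp 2 (Fin.snoc (0 : Fin m → ℝ) (-1))) with hv
  set c' : EuclideanSpace ℝ (Fin (m+1)) := WithLp.toLp 2 (Fin.snoc c (-β) : Fin (m+1) → ℝ) with hc'
  have hinner : ∀ x w' : EuclideanSpace ℝ (Fin (m+1)),
      ⟪x, w'⟫_ℝ = ∑ j : Fin (m+1), x j * w' j := by
    intro x w'
    simp [PiLp.inner_apply, RCLike.inner_apply, mul_comm]
  have key : ∀ w' : EuclideanSpace ℝ (Fin (m+1)),
      (∀ i, ⟪v i, w'⟫_ℝ ≤ 0) → ⟪c', w'⟫_ℝ ≤ 0 := by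
    intro w' hw'
    set w : Fin m → ℝ := fun j => w' j.castSucc with hwdef
    set t : ℝ := w' (Fin.last m) with htdef
    have ht0 : 0 ≤ t := by
      have := hw' (Fin.last p)
      rw [hinner] at this
      rw [Fin.sum_univ_castSucc] at this
      simp [hv] at this
      linarith
    have hrow : ∀ i : Fin p, ∑ j, G i j * w j ≤ g i * t := by
      intro i
      have := hw' i.castSucc
      rw [hinner, Fin.sum_univ_castSucc] at this
      simp only [hv, Fin.snoc_castSucc, Fin.snoc_last] at this
      have h2 : ∑ j : Fin m, G i j * w j + (-(g i)) * t ≤ 0 := this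
      linarith
    rw [hinner, Fin.sum_univ_castSucc]
    simp only [hc', Fin.snoc_castSucc, Fin.snoc_last]
    show ∑ j : Fin m, c j * w j + (-β) * t ≤ 0
    rcases eq_or_lt_of_le ht0 with htz | htpos
    · -- t = 0
      obtain ⟨w₀, hw₀⟩ := hne
      have hGw : ∀ i, (G *ᵥ w) i ≤ 0 := by
        intro i
        have := hrow i
        rw [← htz] at this
        simpa [Matrix.mulVec, dotProduct] using this
      have hcw : ∑ j, c j * w j ≤ 0 := by
        by_contra hpos
        push_neg at hpos
        have hw₀β : ∑ j, c j * w₀ j ≤ β := h w₀ hw₀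
        set s : ℝ := (β - ∑ j, c j * w₀ j + 1) / (∑ j, c j * w j) with hs
        have hs0 : 0 ≤ s := div_nonneg (by linarith) hpos.le
        have hfeas : ∀ i, (G *ᵥ (w₀ + s • w)) i ≤ g i := by
          intro i
          rw [Matrix.mulVec_add, Matrix.mulVec_smul]
          have := hGw i
          have h1 : s * (G *ᵥ w) i ≤ 0 := mul_nonpos_of_nonneg_of_nonpos hs0 this
          have h2 := hw₀ i
          simp only [Pi.add_apply, Pi.smul_apply, smul_eq_mul]
          linarith
        have hres := h (w₀ + s • w) hfeas
        have hsum : ∑ j, c j * (w₀ + s • w) j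
            = (∑ j, c j * w₀ j) + s * ∑ j, c j * w j := by
          rw [Finset.mul_sum, ← Finset.sum_add_distrib]
          congr 1; funext j
          simp only [Pi.add_apply, Pi.smul_apply, smul_eq_mul]
          ring
        rw [hsum] at hres
        have : s * ∑ j, c j * w j = β - (∑ j, c j * w₀ j) + 1 := by
          rw [hs]; field_simp
        rw [this] at hres
        linarith
      rw [← htz]
      simpa using hcw
    · -- t > 0
      have hfeas : ∀ i, (G *ᵥ (t⁻¹ • w)) i ≤ g i := by
        intro i
        rw [Matrix.mulVec_smul]
        have h1 : (G *ᵥ w) i ≤ g i * t := by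
          simpa [Matrix.mulVec, dotProduct] using hrow i
        have h2 : t⁻¹ * (G *ᵥ w) i ≤ t⁻¹ * (g i * t) :=
          mul_le_mul_of_nonneg_left h1 (inv_nonneg.mpr ht0)
        have h3 : t⁻¹ * (g i * t) = g i := by field_simp
        simpa [h3] using h2
      have hres := h (t⁻¹ • w) hfeas
      have hsum : ∑ j, c j * (t⁻¹ • w) j = t⁻¹ * ∑ j, c j * w j := by
        rw [Finset.mul_sum]
        congr 1; funext j
        simp only [Pi.smul_apply, smul_eq_mul]; ring
      rw [hsum] at hres
      have : ∑ j, c j * w j ≤ β * t := by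
        have := mul_le_mul_of_nonneg_left hres ht0
        rw [← mul_assoc, mul_inv_cancel₀ (ne_of_gt htpos), one_mul] at this
        linarith [this]
      linarith
  obtain ⟨ξ', hξ'0, hξ'sum⟩ := farkas_homog v c' key
  have hcoord : ∀ j : Fin (m+1), ∑ i : Fin (p+1), ξ' i * v i j = c' j := by
    intro j
    have h1 : (∑ i : Fin (p+1), ξ' i • v i) j = c' j := congrArg (fun x => x j) hξ'sum
    rw [← h1]
    rw [WithLp.ofLp_sum, Finset.sum_apply]
    rfl
  refine ⟨fun i => ξ' i.castSucc, fun i => hξ'0 _, ?_, ?_⟩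
  · intro j
    have := hcoord j.castSucc
    rw [Fin.sum_univ_castSucc] at this
    simpa [hv, hc'] using this
  · have := hcoord (Fin.last m)
    rw [Fin.sum_univ_castSucc] at this
    simp only [hv, hc', Fin.snoc_castSucc, Fin.snoc_last] at this
    have hlast : 0 ≤ ξ' (Fin.last p) := hξ'0 _
    have heq : ∑ i : Fin p, ξ' i.castSucc * (-(g i)) + ξ' (Fin.last p) * (-1) = -β := this
    have : ∑ i : Fin p, ξ' i.castSucc * g i = β - ξ' (Fin.last p) := by
      have h2 : ∑ i : Fin p, ξ' i.castSucc * (-(g i)) = -∑ i : Fin p, ξ' i.castSucc * g i := by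
        rw [← Finset.sum_neg_distrib]
        congr 1; funext i; ring
      rw [h2] at heq
      linarith
    linarith

lemma farkas_mulVec_apply {a b c : ℕ} (A : Matrix (Fin a) (Fin b) ℝ)
    (B : Matrix (Fin b) (Fin c) ℝ) (w : Fin c → ℝ) (i : Fin a) :
    (A *ᵥ (B *ᵥ w)) i = ∑ j, (A * B) i j * w j := by
  rw [Matrix.mulVec_mulVec]
  rfl

theorem stmt_7 (m n n₀ s p : ℕ)
    (G : Matrix (Fin p) (Fin m) ℝ) (g : Fin p → ℝ)
    (hne : ∃ w : Fin m → ℝ, ∀ i, (G *ᵥ w) i ≤ g i)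
    (H : Matrix (Fin s) (Fin n) ℝ)
    (Φ₁ : Matrix (Fin n) (Fin n₀) ℝ) (Φ₂ : Matrix (Fin n) (Fin m) ℝ)
    (x₀ : Fin n₀ → ℝ) (h : Fin s → ℝ) :
    (∀ w : Fin m → ℝ, (∀ i, (G *ᵥ w) i ≤ g i) →
        ∀ i, (H *ᵥ (Φ₁ *ᵥ x₀ + Φ₂ *ᵥ w)) i ≤ h i)
    ↔ ∃ Ξ : Matrix (Fin s) (Fin p) ℝ,
        (∀ i j, 0 ≤ Ξ i j) ∧ H * Φ₂ = Ξ * G ∧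
        ∀ i, (H *ᵥ (Φ₁ *ᵥ x₀)) i + (Ξ *ᵥ g) i ≤ h i := by
  have hexp : ∀ (w : Fin m → ℝ) (i : Fin s),
      (H *ᵥ (Φ₁ *ᵥ x₀ + Φ₂ *ᵥ w)) i
        = (H *ᵥ (Φ₁ *ᵥ x₀)) i + ∑ j, (H * Φ₂) i j * w j := by
    intro w i
    rw [Matrix.mulVec_add, Pi.add_apply, farkas_mulVec_apply, farkas_mulVec_apply]
  constructor
  · intro hyp
    have hall : ∀ i : Fin s, ∃ ξ : Fin p → ℝ, (∀ k, 0 ≤ ξ k) ∧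
        (∀ j, ∑ k, ξ k * G k j = (H * Φ₂) i j) ∧
        ∑ k, ξ k * g k ≤ h i - (H *ᵥ (Φ₁ *ᵥ x₀)) i := by
      intro i
      apply farkas_affine G g hne (fun j => (H * Φ₂) i j)
        (h i - (H *ᵥ (Φ₁ *ᵥ x₀)) i)
      intro w hw
      have := hyp w hw i
      rw [hexp w i] at this
      linarith
    choose Ξ hΞ0 hΞeq hΞg using hall
    refine ⟨fun i => Ξ i, fun i j => hΞ0 i j, ?_, ?_⟩
    · ext i j
      rw [Matrix.mul_apply]
      exact (hΞeq i j).symm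
    · intro i
      have hg : ((fun i => Ξ i : Matrix (Fin s) (Fin p) ℝ) *ᵥ g) i
          = ∑ k, Ξ i k * g k := rfl
      rw [hg]
      linarith [hΞg i]
  · rintro ⟨Ξ, hΞ0, hΞG, hΞh⟩ w hw i
    rw [hexp w i]
    have h1 : ∑ j, (H * Φ₂) i j * w j = (Ξ *ᵥ (G *ᵥ w)) i := by
      rw [hΞG, ← farkas_mulVec_apply]
    rw [h1]
    have h2 : (Ξ *ᵥ (G *ᵥ w)) i ≤ (Ξ *ᵥ g) i := by
      simp only [Matrix.mulVec, dotProduct]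
      apply Finset.sum_le_sum
      intro k _
      exact mul_le_mul_of_nonneg_left (hw k) (hΞ0 i k)
    linarith [hΞh i]
end

section
/- Suppose H = blkdiag(H₁,...,H_N) and G = blkdiag(G₁,...,G_N) are block diagonal, and Φ has block sparsity pattern S (i.e., block (i,j) of Φ is zero whenever (i,j) ∉ S). If Ξ ≥ 0 satisfies ΞG = HΦ and Ξg ≤ h, then the matrix Ξ' obtained from Ξ by zeroing out all blocks (i,j) ∉ S also satisfies Ξ' ≥ 0, Ξ'G = HΦ, and Ξ'g ≤ h, provided g ≥ 0 componentwise. -/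
open Matrix

open Classical in
theorem stmt_8 (N a b c m : ℕ) (S : Set (Fin N × Fin N))
    (H : Matrix (Fin N × Fin a) (Fin N × Fin b) ℝ)
    (G : Matrix (Fin N × Fin c) (Fin N × Fin m) ℝ)
    (hH : ∀ p q, p.1 ≠ q.1 → H p q = 0)
    (hG : ∀ p q, p.1 ≠ q.1 → G p q = 0)
    (Φ : Matrix (Fin N × Fin b) (Fin N × Fin m) ℝ)
    (hΦ : ∀ p q, (p.1, q.1) ∉ S → Φ p q = 0)
    (g : Fin N × Fin c → ℝ) (h : Fin N × Fin a → ℝ)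
    (hg : ∀ i, 0 ≤ g i)
    (Ξ : Matrix (Fin N × Fin a) (Fin N × Fin c) ℝ)
    (hΞpos : ∀ p q, 0 ≤ Ξ p q)
    (hΞG : Ξ * G = H * Φ)
    (hΞg : ∀ i, (Ξ *ᵥ g) i ≤ h i) :
    let Ξ' : Matrix (Fin N × Fin a) (Fin N × Fin c) ℝ :=
      Matrix.of fun p q => if (p.1, q.1) ∈ S then Ξ p q else 0
    (∀ p q, 0 ≤ Ξ' p q) ∧ Ξ' * G = H * Φ ∧ (∀ i, (Ξ' *ᵥ g) i ≤ h i) ∧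
      (∀ p q, (p.1, q.1) ∉ S → Ξ' p q = 0) := by
  intro Ξ'
  refine ⟨?_, ?_, ?_, ?_⟩
  · intro p q
    simp only [Ξ', Matrix.of_apply]
    split
    · exact hΞpos p q
    · exact le_refl 0
  · ext p q
    by_cases hpq : (p.1, q.1) ∈ S
    · rw [← hΞG]
      simp only [Matrix.mul_apply]
      apply Finset.sum_congr rfl
      intro r _
      by_cases hr : r.1 = q.1
      · simp only [Ξ', Matrix.of_apply, hr, hpq, if_true]
      · rw [hG r q hr, mul_zero, mul_zero]
    · have h1 : (Ξ' * G) p q = 0 := by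
        simp only [Matrix.mul_apply]
        apply Finset.sum_eq_zero
        intro r _
        by_cases hr : r.1 = q.1
        · have : (p.1, r.1) ∉ S := by rw [hr]; exact hpq
          simp only [Ξ', Matrix.of_apply, this, if_false, zero_mul]
        · rw [hG r q hr, mul_zero]
      have h2 : (H * Φ) p q = 0 := by
        simp only [Matrix.mul_apply]
        apply Finset.sum_eq_zero
        intro r _
        by_cases hr : r.1 = p.1
        · have : (r.1, q.1) ∉ S := by rw [hr]; exact hpq
          rw [hΦ r q this, mul_zero]
        · rw [hH p r (Ne.symm hr), zero_mul]
      rw [h1, h2]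
  · intro i
    refine le_trans ?_ (hΞg i)
    simp only [Matrix.mulVec, dotProduct]
    apply Finset.sum_le_sum
    intro r _
    apply mul_le_mul_of_nonneg_right _ (hg r)
    simp only [Ξ', Matrix.of_apply]
    split
    · exact le_refl _
    · exact hΞpos i r
  · intro p q hpq
    simp only [Ξ', Matrix.of_apply, hpq, if_false]
end
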